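/- In any maximal [r,s,t]-coloring of a graph G, every singleton-class vertex w has at least one neighbor in every color class of size 2. -/

import Mathlib

open Finset

variable {V : Type*}

/-- `P` is the set of color classes of an `[r,s,t]`-coloring of `G`:
a partition of the vertices into independent sets, with `r` classes of size 3,
`s` classes of size 2 and `t` singleton classes. -/
def IsRST [Fintype V] [DecidableEq V] (G : SimpleGraph V) (P : Finset (Finset V))
    (r s t : ℕ) : Prop :=
  (∀ v : V, ∃! A, A ∈ P ∧ v ∈ A) ∧
  (∀ A ∈ P, ∀ u ∈ A, ∀ w ∈ A, ¬ G.Adj u w) ∧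
  (P.filter (fun A => A.card = 3)).card = r ∧
  (P.filter (fun A => A.card = 2)).card = s ∧
  (P.filter (fun A => A.card = 1)).card = t ∧
  (∀ A ∈ P, A.card = 1 ∨ A.card = 2 ∨ A.card = 3)

/-- A maximal `[r,s,t]`-coloring: for any other `[r',s',t']`-coloring,
either `r > r'`, or `r = r'` and `s ≥ s'`. -/
def IsMaxRST [Fintype V] [DecidableEq V] (G : SimpleGraph V) (P : Finset (Finset V))
    (r s t : ℕ) : Prop :=
  IsRST G P r s t ∧
  ∀ (P' : Finset (Finset V)) (r' s' t' : ℕ), IsRST G P' r' s' t' →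
    r' < r ∨ (r' = r ∧ s' ≤ s)

/-- `eB G X Y` is the number of edges with one endpoint in `X` and the other in `Y`. -/
def eB [Fintype V] [DecidableEq V] (G : SimpleGraph V) [DecidableRel G.Adj]
    (X Y : Finset V) : ℕ :=
  ((X ×ˢ Y).filter fun p => G.Adj p.1 p.2).card

/-- `G` is equitably `k`-colorable: a proper `k`-coloring whose color classes
have sizes differing pairwise by at most 1. -/
def EqColorable [Fintype V] (G : SimpleGraph V) (k : ℕ) : Prop :=
  ∃ C : V → Fin k, (∀ u v, G.Adj u v → C u ≠ C v) ∧
    ∀ i j : Fin k,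
      (Finset.univ.filter fun v => C v = i).card ≤
        (Finset.univ.filter fun v => C v = j).card + 1

theorem stmt5 [Fintype V] [DecidableEq V] (G : SimpleGraph V)
    (P : Finset (Finset V)) (r s t : ℕ)
    (h : IsMaxRST G P r s t) :
    ∀ A ∈ P, A.card = 1 → ∀ w ∈ A, ∀ U ∈ P, U.card = 2 →
      ∃ u ∈ U, G.Adj w u := by
  intro A hA hA1 w hw U hU hU2
  by_contra hcon
  push_neg at hcon
  obtain ⟨hP, hmax⟩ := h
  obtain ⟨huniq, hind, hr, hs, ht, hsz⟩ := hP
  -- A = {w}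
  obtain ⟨a, ha⟩ := Finset.card_eq_one.mp hA1
  have hAw : A = {w} := by
    subst ha; simp at hw; subst hw; rfl
  -- w ∉ U
  have hwU : w ∉ U := by
    intro hwU
    have := (huniq w).unique ⟨hA, hw⟩ ⟨hU, hwU⟩
    rw [this] at hA1; omega
  have hAU : A ≠ U := by intro h'; rw [h'] at hA1; omega
  set B := insert w U with hB
  have hBcard : B.card = 3 := by
    rw [hB, Finset.card_insert_of_notMem hwU, hU2]
  have hBP : B ∉ P := by
    intro hBP
    have : B = A := (huniq w).unique ⟨hBP, by simp [hB]⟩ ⟨hA, hw⟩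
    rw [this] at hBcard; omega
  set P' := insert B ((P.erase A).erase U) with hP'
  have hmem : ∀ C, C ∈ P' ↔ C = B ∨ (C ∈ P ∧ C ≠ A ∧ C ≠ U) := by
    intro C
    simp only [hP', Finset.mem_insert, Finset.mem_erase]
    tauto
  -- unique class of w is A
  have hwclass : ∀ C ∈ P, w ∈ C → C = A := fun C hC hwC =>
    (huniq w).unique ⟨hC, hwC⟩ ⟨hA, hw⟩
  have hRST : IsRST G P' (r + 1) (s - 1) (t - 1) := by
    refine ⟨?_, ?_, ?_, ?_, ?_, ?_⟩
    · -- partition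
      intro v
      obtain ⟨C0, ⟨hC0P, hvC0⟩, hC0u⟩ := huniq v
      by_cases hCA : C0 = A
      · subst hCA
        rw [hAw] at hvC0; simp at hvC0; subst hvC0
        refine ⟨B, ⟨by simp [hP'], by simp [hB]⟩, ?_⟩
        rintro D ⟨hD, hvD⟩
        rcases (hmem D).mp hD with h1 | ⟨h1, h2, h3⟩
        · exact h1
        · exact absurd (hwclass D h1 hvD) h2
      · by_cases hCU : C0 = U
        · subst hCU
          refine ⟨B, ⟨by simp [hP'], by simp [hB, hvC0]⟩, ?_⟩
          rintro D ⟨hD, hvD⟩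
          rcases (hmem D).mp hD with h1 | ⟨h1, h2, h3⟩
          · exact h1
          · exact absurd (hC0u D ⟨h1, hvD⟩) h3
        · refine ⟨C0, ⟨(hmem C0).mpr (Or.inr ⟨hC0P, hCA, hCU⟩), hvC0⟩, ?_⟩
          rintro D ⟨hD, hvD⟩
          rcases (hmem D).mp hD with h1 | ⟨h1, h2, h3⟩
          · subst h1
            rw [hB, Finset.mem_insert] at hvD
            rcases hvD with h4 | h4
            · subst h4; exact absurd (hC0u A ⟨hA, hw⟩).symm hCA
            · exact absurd (hC0u U ⟨hU, h4⟩).symm hCU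
          · exact hC0u D ⟨h1, hvD⟩
    · -- independence
      intro C hC u hu x hx
      rcases (hmem C).mp hC with h1 | ⟨h1, _, _⟩
      · subst h1
        rw [hB, Finset.mem_insert] at hu hx
        rcases hu with hu | hu <;> rcases hx with hx | hx
        · rw [hu, hx]; exact G.irrefl
        · rw [hu]; exact hcon x hx
        · rw [hx]; intro had; exact hcon u hu had.symm
        · exact hind U hU u hu x hx
      · exact hind C h1 u hu x hx
    · -- card 3 count
      have heq : P'.filter (fun C => C.card = 3) =
          insert B (P.filter (fun C => C.card = 3)) := by
        ext C
        simp only [Finset.mem_filter, Finset.mem_insert, hmem C]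
        constructor
        · rintro ⟨h1 | ⟨h1, h2, h3⟩, h4⟩
          · exact Or.inl h1
          · exact Or.inr ⟨h1, h4⟩
        · rintro (h1 | ⟨h1, h4⟩)
          · subst h1; exact ⟨Or.inl rfl, hBcard⟩
          · refine ⟨Or.inr ⟨h1, ?_, ?_⟩, h4⟩
            · intro h'; rw [h'] at h4; omega
            · intro h'; rw [h'] at h4; omega
      rw [heq, Finset.card_insert_of_notMem (fun h' => hBP (Finset.mem_filter.mp h').1), hr]
    · -- card 2 count
      have hUm : U ∈ P.filter (fun C => C.card = 2) := Finset.mem_filter.mpr ⟨hU, hU2⟩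
      have heq : P'.filter (fun C => C.card = 2) =
          (P.filter (fun C => C.card = 2)).erase U := by
        ext C
        simp only [Finset.mem_filter, Finset.mem_erase, hmem C]
        constructor
        · rintro ⟨h1 | ⟨h1, h2, h3⟩, h4⟩
          · rw [h1] at h4; omega
          · exact ⟨h3, h1, h4⟩
        · rintro ⟨h3, h1, h4⟩
          refine ⟨Or.inr ⟨h1, ?_, h3⟩, h4⟩
          intro h'; rw [h'] at h4; omega
      rw [heq, Finset.card_erase_of_mem hUm, hs]
    · -- card 1 count
      have hAm : A ∈ P.filter (fun C => C.card = 1) := Finset.mem_filter.mpr ⟨hA, hA1⟩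
      have heq : P'.filter (fun C => C.card = 1) =
          (P.filter (fun C => C.card = 1)).erase A := by
        ext C
        simp only [Finset.mem_filter, Finset.mem_erase, hmem C]
        constructor
        · rintro ⟨h1 | ⟨h1, h2, h3⟩, h4⟩
          · rw [h1] at h4; omega
          · exact ⟨h2, h1, h4⟩
        · rintro ⟨h2, h1, h4⟩
          refine ⟨Or.inr ⟨h1, h2, ?_⟩, h4⟩
          intro h'; rw [h'] at h4; omega
      rw [heq, Finset.card_erase_of_mem hAm, ht]
    · -- sizes
      intro C hC
      rcases (hmem C).mp hC with h1 | ⟨h1, _, _⟩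
      · subst h1; right; right; exact hBcard
      · exact hsz C h1
  rcases hmax P' (r + 1) (s - 1) (t - 1) hRST with h' | ⟨h', _⟩ <;> omega
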